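/- Let ξₙ be nonnegative random variables with E[ξₙ] = 1 and sup_n E[ξₙ ln⁺ ξₙ] ≤ C < ∞, and let S be a random variable with E[exp(a S²)] < ∞ for some a > 0. Then sup_n E[ξₙ · 1_{ξₙ|S| ≥ b}] → 0 as b → ∞; in particular the family (ξₙ S)ₙ is uniformly integrable provided additionally sup_n E[ξₙ S²] < ∞. -/

import Mathlib

set_option maxHeartbeats 1000000


open MeasureTheory Real Filter
open scoped NNReal ENNReal

/-- Young-type inequality: `x * y ≤ x * ln⁺ x + e^y` for `x ≥ 0`. -/
lemma young_aux (x y : ℝ) (hx : 0 ≤ x) :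
    x * y ≤ x * max (Real.log x) 0 + Real.exp y := by
  rcases eq_or_lt_of_le hx with h | hx
  · rw [← h, zero_mul, zero_mul, zero_add]
    positivity
  · have h1 : x * y - x * Real.log x ≤ Real.exp y := by
      have heq : x * y - x * Real.log x = x * Real.log (Real.exp y / x) := by
        rw [Real.log_div (Real.exp_ne_zero y) (ne_of_gt hx), Real.log_exp]
        ring
      rw [heq]
      calc x * Real.log (Real.exp y / x) ≤ x * (Real.exp y / x - 1) :=
            mul_le_mul_of_nonneg_left (Real.log_le_sub_one_of_pos (by positivity)) hx.le
        _ = Real.exp y - x := by field_simp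
        _ ≤ Real.exp y := by linarith
    have h2 : x * Real.log x ≤ x * max (Real.log x) 0 :=
      mul_le_mul_of_nonneg_left (le_max_left _ _) hx.le
    linarith

/-- If ξₙ ≥ 0 with E[ξₙ] = 1 and sup_n E[ξₙ ln⁺ ξₙ] ≤ C < ∞, and E[exp(aS²)] < ∞ for some
a > 0, then sup_n E[ξₙ·1_{ξₙ|S| ≥ b}] → 0 as b → ∞; in particular, if additionally
sup_n E[ξₙS²] < ∞, then the family (ξₙS)ₙ is uniformly integrable. -/
theorem stmt12 {Ω : Type*} {F : MeasurableSpace Ω} (μ : Measure Ω) [IsProbabilityMeasure μ]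
    (ξ : ℕ → Ω → ℝ) (S : Ω → ℝ)
    (hmeas : ∀ n, Measurable (ξ n)) (hSmeas : Measurable S)
    (hnn : ∀ n, ∀ᵐ ω ∂μ, 0 ≤ ξ n ω)
    (hint : ∀ n, Integrable (ξ n) μ) (hone : ∀ n, ∫ ω, ξ n ω ∂μ = 1)
    (hentint : ∀ n, Integrable (fun ω => ξ n ω * max (Real.log (ξ n ω)) 0) μ)
    (C : ℝ) (hC : ∀ n, ∫ ω, ξ n ω * max (Real.log (ξ n ω)) 0 ∂μ ≤ C)
    (a : ℝ) (ha : 0 < a)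
    (hS : Integrable (fun ω => Real.exp (a * (S ω) ^ 2)) μ) :
    Tendsto (fun b : ℝ => ⨆ n : ℕ, ∫ ω in {ω | b ≤ ξ n ω * |S ω|}, ξ n ω ∂μ)
        atTop (nhds 0) ∧
    ((∃ K : ℝ, ∀ n, Integrable (fun ω => ξ n ω * (S ω) ^ 2) μ ∧
        ∫ ω, ξ n ω * (S ω) ^ 2 ∂μ ≤ K) →
      UniformIntegrable (fun n ω => ξ n ω * S ω) 1 μ) := by
  obtain ⟨I, hI⟩ : ∃ I : ℝ, I = ∫ ω, Real.exp (a * (S ω) ^ 2) ∂μ := ⟨_, rfl⟩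
  obtain ⟨M, hM⟩ : ∃ M : ℝ, M = (3/2) * C + (1/2) * (I / a + 1) := ⟨_, rfl⟩
  have hC0 : 0 ≤ C := by
    refine le_trans ?_ (hC 0)
    apply integral_nonneg_of_ae
    filter_upwards [hnn 0] with ω hω
    exact mul_nonneg hω (le_max_right _ _)
  have hI0 : 0 ≤ I := hI ▸ integral_nonneg fun ω => (Real.exp_pos _).le
  have hMnn : 0 ≤ M := by
    have : 0 ≤ I / a := div_nonneg hI0 ha.le
    rw [hM]; linarith
  -- the key estimate
  have key : ∀ n, ∀ b : ℝ, 1 < b →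
      ∫ ω in {ω | b ≤ ξ n ω * |S ω|}, ξ n ω ∂μ ≤ M / Real.log b := by
    intro n b hb
    set A : Set Ω := {ω | b ≤ ξ n ω * |S ω|} with hAdef
    have hA : MeasurableSet A := measurableSet_le measurable_const ((hmeas n).mul hSmeas.abs)
    have hlb : 0 < Real.log b := Real.log_pos hb
    set g : Ω → ℝ := fun ω =>
      (3/2) * (ξ n ω * max (Real.log (ξ n ω)) 0)
        + (1/2) * (Real.exp (a * (S ω) ^ 2) / a + 1) with hg
    have hgint : Integrable g μ :=
      ((hentint n).const_mul _).add (((hS.div_const a).add (integrable_const 1)).const_mul _)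
    have hindint : Integrable (fun ω => Real.log b * Set.indicator A (ξ n) ω) μ :=
      (((hint n).indicator hA).const_mul _)
    have hmono : ∫ ω, Real.log b * Set.indicator A (ξ n) ω ∂μ ≤ ∫ ω, g ω ∂μ := by
      refine integral_mono_ae hindint hgint ?_
      filter_upwards [hnn n] with ω hω
      by_cases hmem : ω ∈ A
      · have hbs : b ≤ ξ n ω * |S ω| := hmem
        have hξ : 0 < ξ n ω := by
          rcases hω.eq_or_lt with h | h
          · exfalso; rw [← h, zero_mul] at hbs; linarith
          · exact h
        have hSpos : 0 < |S ω| := by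
          by_contra h
          push_neg at h
          have h0 : |S ω| = 0 := le_antisymm h (abs_nonneg _)
          rw [h0, mul_zero] at hbs; linarith
        rw [Set.indicator_of_mem hmem]
        set m : ℝ := max (|S ω|) 1 with hm
        have hmpos : 0 < m := lt_of_lt_of_le one_pos (le_max_right _ _)
        have step1 : Real.log b ≤ Real.log (ξ n ω) + Real.log m := by
          calc Real.log b ≤ Real.log (ξ n ω * |S ω|) := Real.log_le_log (by linarith) hbs
            _ = Real.log (ξ n ω) + Real.log (|S ω|) :=
              Real.log_mul (ne_of_gt hξ) (ne_of_gt hSpos)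
            _ ≤ Real.log (ξ n ω) + Real.log m := by
              have := Real.log_le_log hSpos (le_max_left (|S ω|) 1)
              linarith
        have hy := young_aux (ξ n ω) (2 * Real.log m) hω
        have hexp : Real.exp (2 * Real.log m) = m ^ 2 := by
          rw [two_mul, Real.exp_add, Real.exp_log hmpos]; ring
        have hmsq : m ^ 2 ≤ Real.exp (a * (S ω) ^ 2) / a + 1 := by
          have h1 : m ^ 2 ≤ (S ω) ^ 2 + 1 := by
            rcases le_total (|S ω|) 1 with h | h
            · rw [hm, max_eq_right h]; nlinarith [sq_nonneg (S ω)]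
            · rw [hm, max_eq_left h, sq_abs]; linarith
          have h2 : (S ω) ^ 2 ≤ Real.exp (a * (S ω) ^ 2) / a := by
            rw [le_div_iff₀ ha]
            have := Real.add_one_le_exp (a * (S ω) ^ 2)
            linarith
          linarith
        have step2 : ξ n ω * Real.log m ≤
            (1/2) * (ξ n ω * max (Real.log (ξ n ω)) 0 + (Real.exp (a * (S ω) ^ 2) / a + 1)) := by
          rw [hexp] at hy
          nlinarith
        have step0 : Real.log b * ξ n ω ≤ ξ n ω * Real.log (ξ n ω) + ξ n ω * Real.log m := by
          have := mul_le_mul_of_nonneg_left step1 hω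
          nlinarith
        have hlog_le : ξ n ω * Real.log (ξ n ω) ≤ ξ n ω * max (Real.log (ξ n ω)) 0 :=
          mul_le_mul_of_nonneg_left (le_max_left _ _) hω
        show Real.log b * ξ n ω ≤ g ω
        rw [hg]
        dsimp only
        linarith
      · rw [Set.indicator_of_notMem hmem, mul_zero]
        have h1 : 0 ≤ ξ n ω * max (Real.log (ξ n ω)) 0 := mul_nonneg hω (le_max_right _ _)
        have h2 : 0 ≤ Real.exp (a * (S ω) ^ 2) / a := by positivity
        show (0:ℝ) ≤ g ω
        rw [hg]; dsimp only; linarith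
    have e1 : Integrable (fun ω => (3/2 : ℝ) * (ξ n ω * max (Real.log (ξ n ω)) 0)) μ :=
      (hentint n).const_mul _
    have e3 : Integrable (fun ω => Real.exp (a * (S ω) ^ 2) / a) μ := hS.div_const a
    have e4 : Integrable (fun ω => Real.exp (a * (S ω) ^ 2) / a + 1) μ :=
      e3.add (integrable_const 1)
    have e2 : Integrable (fun ω => (1/2 : ℝ) * (Real.exp (a * (S ω) ^ 2) / a + 1)) μ :=
      e4.const_mul _
    have hgle : ∫ ω, g ω ∂μ ≤ M := by
      rw [hg]
      rw [integral_add e1 e2, integral_const_mul, integral_const_mul,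
        integral_add e3 (integrable_const 1), integral_div, integral_const]
      simp only [measure_univ, ENNReal.toReal_one, smul_eq_mul, one_mul, mul_one, probReal_univ]
      rw [hM, hI]
      have := hC n
      linarith
    calc ∫ ω in A, ξ n ω ∂μ = ∫ ω, Set.indicator A (ξ n) ω ∂μ := (integral_indicator hA).symm
      _ ≤ M / Real.log b := by
        rw [le_div_iff₀ hlb]
        calc (∫ ω, Set.indicator A (ξ n) ω ∂μ) * Real.log b
            = ∫ ω, Real.log b * Set.indicator A (ξ n) ω ∂μ := by
              rw [integral_const_mul]; ring
          _ ≤ ∫ ω, g ω ∂μ := hmono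
          _ ≤ M := hgle
  have hbdd : ∀ b : ℝ, 1 < b →
      BddAbove (Set.range fun n : ℕ => ∫ ω in {ω | b ≤ ξ n ω * |S ω|}, ξ n ω ∂μ) := by
    intro b hb
    exact ⟨M / Real.log b, by rintro x ⟨n, rfl⟩; exact key n b hb⟩
  constructor
  · refine tendsto_of_tendsto_of_tendsto_of_le_of_le' tendsto_const_nhds
      (Tendsto.div_atTop (tendsto_const_nhds (x := M)) Real.tendsto_log_atTop) ?_ ?_
    · filter_upwards [eventually_gt_atTop (1:ℝ)] with b hb
      refine le_trans ?_ (le_ciSup (hbdd b hb) 0)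
      apply setIntegral_nonneg_ae (measurableSet_le measurable_const ((hmeas 0).mul hSmeas.abs))
      filter_upwards [hnn 0] with ω hω _
      exact hω
    · filter_upwards [eventually_gt_atTop (1:ℝ)] with b hb
      exact ciSup_le fun n => key n b hb
  · rintro ⟨K, hK⟩
    have hK0 : 0 ≤ K := by
      refine le_trans ?_ (hK 0).2
      apply integral_nonneg_of_ae
      filter_upwards [hnn 0] with ω hω
      exact mul_nonneg hω (sq_nonneg _)
    refine uniformIntegrable_of le_rfl ENNReal.one_ne_top
      (fun i => ((hmeas i).mul hSmeas).aestronglyMeasurable) ?_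
    intro ε hε
    obtain ⟨R, hR⟩ : ∃ R : ℝ, R = 2 * (K + 1) / ε := ⟨_, rfl⟩
    have hRpos : 0 < R := by rw [hR]; positivity
    obtain ⟨c, hc⟩ : ∃ c : ℝ, c = Real.exp (max 1 (2 * R * M / ε)) := ⟨_, rfl⟩
    have hc1 : 1 < c := by
      have h1 := Real.add_one_le_exp (max 1 (2 * R * M / ε))
      have h2 := le_max_left 1 (2 * R * M / ε)
      rw [hc]; linarith
    have hlogc : Real.log c = max 1 (2 * R * M / ε) := by rw [hc]; exact Real.log_exp _
    have hlogcpos : 0 < Real.log c := Real.log_pos hc1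
    refine ⟨c.toNNReal, fun i => ?_⟩
    have hcoe : ((c.toNNReal : ℝ≥0) : ℝ) = c := Real.coe_toNNReal c (by linarith)
    have hBset : {x | (c.toNNReal : ℝ≥0) ≤ ‖ξ i x * S x‖₊} = {x | c ≤ |ξ i x * S x|} := by
      ext x
      rw [Set.mem_setOf_eq, Set.mem_setOf_eq, ← NNReal.coe_le_coe, hcoe, coe_nnnorm,
        Real.norm_eq_abs]
    set B : Set Ω := {x | c ≤ |ξ i x * S x|} with hBdef
    have hB : MeasurableSet B := measurableSet_le measurable_const ((hmeas i).mul hSmeas).abs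
    set A : Set Ω := {ω | c ≤ ξ i ω * |S ω|} with hAdef
    have hA : MeasurableSet A := measurableSet_le measurable_const ((hmeas i).mul hSmeas.abs)
    have hsum : Integrable (fun ω => ξ i ω + ξ i ω * (S ω) ^ 2) μ := (hint i).add (hK i).1
    have hfint : Integrable (fun ω => ξ i ω * S ω) μ := by
      refine Integrable.mono' hsum (((hmeas i).mul hSmeas).aestronglyMeasurable) ?_
      filter_upwards [hnn i] with ω hω
      rw [Real.norm_eq_abs, abs_mul, abs_of_nonneg hω]
      have h1 : |S ω| ≤ 1 + (S ω) ^ 2 := by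
        nlinarith [sq_nonneg (|S ω| - 1), sq_abs (S ω), abs_nonneg (S ω)]
      nlinarith [mul_le_mul_of_nonneg_left h1 hω]
    show eLpNorm (Set.indicator {x | c.toNNReal ≤ ‖ξ i x * S x‖₊} (fun ω => ξ i ω * S ω)) 1 μ
      ≤ ENNReal.ofReal ε
    rw [hBset]
    rw [eLpNorm_one_eq_lintegral_enorm,
      ← ofReal_integral_norm_eq_lintegral_enorm (hfint.indicator hB)]
    apply ENNReal.ofReal_le_ofReal
    have hint2 : Integrable (fun ω => R * Set.indicator A (ξ i) ω + ξ i ω * (S ω) ^ 2 / R) μ :=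
      (((hint i).indicator hA).const_mul R).add ((hK i).1.div_const R)
    have hbound : ∀ᵐ ω ∂μ, ‖Set.indicator B (fun ω => ξ i ω * S ω) ω‖ ≤
        R * Set.indicator A (ξ i) ω + ξ i ω * (S ω) ^ 2 / R := by
      filter_upwards [hnn i] with ω hω
      have hindnn : 0 ≤ Set.indicator A (ξ i) ω := Set.indicator_apply_nonneg fun _ => hω
      by_cases hmem : ω ∈ B
      · have hcle : c ≤ |ξ i ω * S ω| := hmem
        rw [abs_mul, abs_of_nonneg hω] at hcle
        have hAm : ω ∈ A := hcle
        rw [Set.indicator_of_mem hmem, Set.indicator_of_mem hAm, Real.norm_eq_abs, abs_mul,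
          abs_of_nonneg hω]
        rcases le_total (|S ω|) R with h | h
        · have h1 := mul_le_mul_of_nonneg_left h hω
          have h2 : 0 ≤ ξ i ω * (S ω) ^ 2 / R := div_nonneg (mul_nonneg hω (sq_nonneg _)) hRpos.le
          linarith
        · have h1 : ξ i ω * |S ω| ≤ ξ i ω * (S ω) ^ 2 / R := by
            rw [le_div_iff₀ hRpos]
            nlinarith [mul_nonneg (mul_nonneg hω (abs_nonneg (S ω))) (sub_nonneg.2 h),
              sq_abs (S ω)]
          have h2 : 0 ≤ R * ξ i ω := mul_nonneg hRpos.le hω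
          linarith
      · rw [Set.indicator_of_notMem hmem, norm_zero]
        have h2 : 0 ≤ ξ i ω * (S ω) ^ 2 / R := div_nonneg (mul_nonneg hω (sq_nonneg _)) hRpos.le
        nlinarith
    calc ∫ ω, ‖Set.indicator B (fun ω => ξ i ω * S ω) ω‖ ∂μ
        ≤ ∫ ω, (R * Set.indicator A (ξ i) ω + ξ i ω * (S ω) ^ 2 / R) ∂μ :=
          integral_mono_ae (hfint.indicator hB).norm hint2 hbound
      _ = R * (∫ ω, Set.indicator A (ξ i) ω ∂μ) + (∫ ω, ξ i ω * (S ω) ^ 2 ∂μ) / R := by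
          rw [integral_add (((hint i).indicator hA).const_mul R) ((hK i).1.div_const R),
            integral_const_mul, integral_div]
      _ ≤ R * (M / Real.log c) + K / R := by
          have h1 : ∫ ω, Set.indicator A (ξ i) ω ∂μ ≤ M / Real.log c := by
            rw [integral_indicator hA]
            exact key i c hc1
          have h2 : (∫ ω, ξ i ω * (S ω) ^ 2 ∂μ) / R ≤ K / R := by
            gcongr
            exact (hK i).2
          have h3 := mul_le_mul_of_nonneg_left h1 hRpos.le
          linarith
      _ ≤ ε / 2 + ε / 2 := by
          have h1 : R * (M / Real.log c) ≤ ε / 2 := by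
            rw [mul_div_assoc']
            rw [div_le_iff₀ hlogcpos]
            have h3 : 2 * R * M / ε ≤ Real.log c := hlogc ▸ le_max_right _ _
            have h4 : 2 * R * M ≤ Real.log c * ε := (div_le_iff₀ hε).1 h3
            nlinarith
          have h2 : K / R ≤ ε / 2 := by
            rw [div_le_iff₀ hRpos]
            have : ε / 2 * R = K + 1 := by
              rw [hR]; field_simp
            linarith
          linarith
      _ = ε := by ring
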